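/- Let A ⊆ ω, let c ∉ A, let S, T ⊆ ω be computable, and define f_S, f_T as in the duplication construction (f_S(2x) = x, f_S(2x+1) = x if x ∈ S, f_S(2x+1) = c if x ∉ S; similarly for f_T) with B_S = f_S⁻¹(A), B_T = f_T⁻¹(A). If h : ω → ω is a total computable injective function witnessing B_S ≤_1 B_T, then the function k_1 defined by k_1(x) := f_T(h(2x+1)) if x ∈ S and k_1(x) := x if x ∉ S is a total computable m-autoreduction of A. -/

import Mathlib

open Classical in
/-- The duplication function: `f_S (2x) = x`, `f_S (2x+1) = x` if `x ∈ S`,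
and `f_S (2x+1) = c` if `x ∉ S`. -/
noncomputable def dupFun (S : Set ℕ) (c : ℕ) (z : ℕ) : ℕ :=
  if z % 2 = 0 then z / 2
  else if z / 2 ∈ S then z / 2 else c

open Classical in
/-- If `h` is a total computable injective reduction witnessing
`B_S ≤₁ B_T` (where `B_S = f_S⁻¹(A)`, `B_T = f_T⁻¹(A)`), then the function
`k₁` with `k₁ x = f_T (h (2x+1))` for `x ∈ S` and `k₁ x = x` for `x ∉ S`
is a total computable m-autoreduction of `A`. -/
theorem stmt_9 (A S T : Set ℕ) (c : ℕ) (hc : c ∉ A)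
    (hS : ComputablePred (· ∈ S)) (hT : ComputablePred (· ∈ T))
    (h : ℕ → ℕ) (hcomp : Computable h) (hinj : Function.Injective h)
    (hred : ∀ z, z ∈ dupFun S c ⁻¹' A ↔ h z ∈ dupFun T c ⁻¹' A) :
    Computable (fun x => if x ∈ S then dupFun T c (h (2 * x + 1)) else x) ∧
    (∀ x, x ∈ A ↔ (if x ∈ S then dupFun T c (h (2 * x + 1)) else x) ∈ A) := by
  obtain ⟨dS, hSc⟩ := hS
  obtain ⟨dT, hTc⟩ := hT
  have hdiv : Computable (fun z : ℕ => z / 2) :=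
    (Primrec.nat_div.comp Primrec.id (Primrec.const 2)).to_comp
  have hmod : Computable (fun z : ℕ => decide (z % 2 = 0)) :=
    (Primrec.eq.comp (Primrec.nat_mod.comp Primrec.id (Primrec.const 2))
      (Primrec.const 0)).decide.to_comp
  have hdup : Computable (dupFun T c) := by
    have hC : Computable (fun z : ℕ =>
        cond (decide (z % 2 = 0)) (z / 2) (cond (decide (z / 2 ∈ T)) (z / 2) c)) :=
      Computable.cond hmod hdiv (Computable.cond (hTc.comp hdiv) hdiv (Computable.const c))
    refine hC.of_eq fun z => ?_
    unfold dupFun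
    by_cases h0 : z % 2 = 0
    · simp [h0]
    · by_cases h1 : z / 2 ∈ T <;> simp [h0, h1]
  have hlin : Computable (fun x : ℕ => 2 * x + 1) :=
    (Primrec.succ.comp (Primrec.nat_mul.comp (Primrec.const 2) Primrec.id)).to_comp
  constructor
  · have hC : Computable (fun x : ℕ =>
        cond (decide (x ∈ S)) (dupFun T c (h (2 * x + 1))) x) :=
      Computable.cond hSc (hdup.comp (hcomp.comp hlin)) Computable.id
    refine hC.of_eq fun x => ?_
    by_cases hx : x ∈ S <;> simp [hx]
  · intro x
    by_cases hx : x ∈ S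
    · have hmem : dupFun S c (2 * x + 1) = x := by
        have h0 : (2 * x + 1) % 2 = 1 := by omega
        have h1 : (2 * x + 1) / 2 = x := by omega
        simp [dupFun, h0, h1, hx]
      have key := hred (2 * x + 1)
      simp only [Set.mem_preimage, hmem] at key
      simpa [hx] using key
    · simp [hx]
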